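/- Let G be a finitely generated group, X a bounded Banach G-module, and ℰ ⊆ ℓ∞(G, X*) a weak-* closed Hopf G-module. Define E_h : ℓ∞(G, ℰ) → ℓ∞(G, X*) by (E_h η)_g = (η_g)_g (where each η_g ∈ ℰ ⊆ ℓ∞(G, X*) is evaluated at g). Then: (1) E_h takes values in ℰ, i.e., E_h(η) ∈ ℰ for every η ∈ ℓ∞(G, ℰ); (2) E_h is linear with norm at most 1; (3) E_h is G-equivariant: E_h(g * η) = g * E_h(η) for all g ∈ G and η ∈ ℓ∞(G, ℰ), where G acts on ℓ∞(G, ℰ) by (g * η)_h = g * (η_{g⁻¹h}) using the restricted action on ℰ; and (4) E_h(ι(x)) = x for every x ∈ ℰ, where ι : ℰ → ℓ∞(G, ℰ) is the inclusion as constant functions, ι(x)_g = x. -/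

import Mathlib

set_option synthInstance.maxHeartbeats 1000000
set_option maxHeartbeats 1000000

open scoped ENNReal
set_option linter.unusedSectionVars false

noncomputable section

variable {G : Type*} [Group G]
variable {X : Type*} [NormedAddCommGroup X] [NormedSpace ℝ X]

/-- Build an element of `ℓ∞(G, Z)` from a uniformly bounded function. -/
def linfElem {Z : Type*} [NormedAddCommGroup Z] (f : G → Z) (C : ℝ) (h : ∀ g, ‖f g‖ ≤ C) :
    lp (fun _ : G => Z) ∞ :=
  ⟨f, memℓp_infty ⟨C, by rintro r ⟨g, rfl⟩; exact h g⟩⟩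

@[simp] lemma linfElem_apply {Z : Type*} [NormedAddCommGroup Z] (f : G → Z) (C : ℝ)
    (h : ∀ g, ‖f g‖ ≤ C) (g : G) : linfElem f C h g = f g := rfl

/-- The action `•` of `ℓ∞(G)` on `ℓ∞(G, Z)`: `(a • f)_g = a_g f_g`. -/
def bullet {Z : Type*} [NormedAddCommGroup Z] [NormedSpace ℝ Z]
    (a : lp (fun _ : G => ℝ) ∞) (f : lp (fun _ : G => Z) ∞) :
    lp (fun _ : G => Z) ∞ :=
  linfElem (fun g => a g • f g) (‖a‖ * ‖f‖) (by
    intro g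
    rw [norm_smul]
    exact mul_le_mul (lp.norm_apply_le_norm ENNReal.top_ne_zero a g)
      (lp.norm_apply_le_norm ENNReal.top_ne_zero f g) (norm_nonneg _) (norm_nonneg _))

/-- The action of `G` on `ℓ∞(G, X*)` given by `(g * f)_h = g (f_{g⁻¹h})`, where `G` acts
on `X*` by the dual action `(gφ)(x) = φ(g⁻¹ x)` of a representation `ρ` of `G` on `X`. -/
def starA (ρ : G →* X →L[ℝ] X) (g : G) (φ : lp (fun _ : G => X →L[ℝ] ℝ) ∞) :
    lp (fun _ : G => X →L[ℝ] ℝ) ∞ :=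
  linfElem (fun h => (φ (g⁻¹ * h)).comp (ρ g⁻¹)) (‖ρ g⁻¹‖ * ‖φ‖) (by
    intro h
    calc ‖(φ (g⁻¹ * h)).comp (ρ g⁻¹)‖ ≤ ‖φ (g⁻¹ * h)‖ * ‖ρ g⁻¹‖ :=
          ContinuousLinearMap.opNorm_comp_le _ _
      _ ≤ ‖ρ g⁻¹‖ * ‖φ‖ := by
          rw [mul_comm]
          gcongr
          exact lp.norm_apply_le_norm ENNReal.top_ne_zero φ _)

/-- The weak-* topology on `ℓ∞(G, X*)` as the dual of `ℓ₁(G, X)`: the coarsest topology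
making `φ ↦ ∑_g φ_g(η_g)` continuous for every `η ∈ ℓ₁(G, X)`. -/
def wstar (G : Type*) (X : Type*) [NormedAddCommGroup X] [NormedSpace ℝ X] :
    TopologicalSpace (lp (fun _ : G => X →L[ℝ] ℝ) ∞) :=
  ⨅ η : lp (fun _ : G => X) 1,
    TopologicalSpace.induced
      (fun φ : lp (fun _ : G => X →L[ℝ] ℝ) ∞ => ∑' g : G, φ g (η g)) inferInstance

end

noncomputable section

variable {G : Type*} [Group G]
variable {X : Type*} [NormedAddCommGroup X] [NormedSpace ℝ X]

lemma starA_norm_le (ρ : G →* X →L[ℝ] X) (g : G) (φ : lp (fun _ : G => X →L[ℝ] ℝ) ∞) :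
    ‖starA ρ g φ‖ ≤ ‖ρ g⁻¹‖ * ‖φ‖ :=
  lp.norm_le_of_forall_le (mul_nonneg (norm_nonneg _) (norm_nonneg _)) fun h => by
    rw [starA]; simp only [linfElem_apply]
    calc ‖(φ (g⁻¹ * h)).comp (ρ g⁻¹)‖ ≤ ‖φ (g⁻¹ * h)‖ * ‖ρ g⁻¹‖ :=
          ContinuousLinearMap.opNorm_comp_le _ _
      _ ≤ ‖ρ g⁻¹‖ * ‖φ‖ := by
          rw [mul_comm]
          gcongr
          exact lp.norm_apply_le_norm ENNReal.top_ne_zero φ _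

/-- The map `E_h : ℓ∞(G, ℰ) → ℓ∞(G, X*)`, `(E_h η)_g = (η_g)_g`, for a subspace
`ℰ ⊆ ℓ∞(G, X*)`. -/
def Eh (ℰ : Submodule ℝ (lp (fun _ : G => X →L[ℝ] ℝ) ∞))
    (η : lp (fun _ : G => ↥ℰ) ∞) : lp (fun _ : G => X →L[ℝ] ℝ) ∞ :=
  linfElem (fun g => ((η g : lp (fun _ : G => X →L[ℝ] ℝ) ∞) : G → X →L[ℝ] ℝ) g) ‖η‖
    (fun g =>
      (lp.norm_apply_le_norm ENNReal.top_ne_zero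
          (η g : lp (fun _ : G => X →L[ℝ] ℝ) ∞) g).trans
        (lp.norm_apply_le_norm ENNReal.top_ne_zero η g))

/-- The action of `G` on `ℓ∞(G, ℰ)`: `(g * η)_h = g * (η_{g⁻¹h})`, using the restriction
of the action `*` on `ℓ∞(G, X*)` to a `G`-invariant subspace `ℰ`. -/
def starE (ℰ : Submodule ℝ (lp (fun _ : G => X →L[ℝ] ℝ) ∞)) (ρ : G →* X →L[ℝ] X)
    (hstar : ∀ (g : G), ∀ φ ∈ ℰ, starA ρ g φ ∈ ℰ) (g : G)
    (η : lp (fun _ : G => ↥ℰ) ∞) : lp (fun _ : G => ↥ℰ) ∞ :=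
  linfElem
    (fun h => (⟨starA ρ g ↑(η (g⁻¹ * h)), hstar g _ (η (g⁻¹ * h)).2⟩ : ↥ℰ))
    (‖ρ g⁻¹‖ * ‖η‖) (by
      intro h
      show ‖starA ρ g (↑(η (g⁻¹ * h)) : lp (fun _ : G => X →L[ℝ] ℝ) ∞)‖ ≤ ‖ρ g⁻¹‖ * ‖η‖
      refine (starA_norm_le ρ g _).trans ?_
      gcongr
      show ‖η (g⁻¹ * h)‖ ≤ ‖η‖
      exact lp.norm_apply_le_norm ENNReal.top_ne_zero η _)

/-- The inclusion `ι : ℰ → ℓ∞(G, ℰ)` as constant functions. -/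
def constE {ℰ : Submodule ℝ (lp (fun _ : G => X →L[ℝ] ℝ) ∞)} (x : ↥ℰ) :
    lp (fun _ : G => ↥ℰ) ∞ :=
  linfElem (fun _ => x) ‖x‖ (fun _ => le_rfl)

end

/-- **Properties of the map `E_h`.**  Let `G` be a finitely generated group, `X` a
bounded Banach `G`-module and `ℰ ⊆ ℓ∞(G, X*)` a weak-* closed Hopf `G`-module.  The map
`E_h : ℓ∞(G, ℰ) → ℓ∞(G, X*)`, `(E_h η)_g = (η_g)_g`, (1) takes values in `ℰ`, (2) is
linear of norm at most 1, (3) is `G`-equivariant, and (4) is a left inverse of the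
inclusion of `ℰ` into `ℓ∞(G, ℰ)` as constant functions. -/
theorem Eh_properties
    {G : Type*} [Group G] [Group.FG G]
    {X : Type*} [NormedAddCommGroup X] [NormedSpace ℝ X] [CompleteSpace X]
    (ρ : G →* X →L[ℝ] X) (C : ℝ) (hρ : ∀ g : G, ‖ρ g‖ ≤ C)
    (ℰ : Submodule ℝ (lp (fun _ : G => X →L[ℝ] ℝ) ∞))
    (hstar : ∀ (g : G), ∀ φ ∈ ℰ, starA ρ g φ ∈ ℰ)
    (hbullet : ∀ (a : lp (fun _ : G => ℝ) ∞), ∀ φ ∈ ℰ, bullet a φ ∈ ℰ)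
    (hclosed : @IsClosed _ (wstar G X) (ℰ : Set (lp (fun _ : G => X →L[ℝ] ℝ) ∞))) :
    (∀ η : lp (fun _ : G => ↥ℰ) ∞, Eh ℰ η ∈ ℰ) ∧
    (∀ η η' : lp (fun _ : G => ↥ℰ) ∞, Eh ℰ (η + η') = Eh ℰ η + Eh ℰ η') ∧
    (∀ (c : ℝ) (η : lp (fun _ : G => ↥ℰ) ∞), Eh ℰ (c • η) = c • Eh ℰ η) ∧
    (∀ η : lp (fun _ : G => ↥ℰ) ∞, ‖Eh ℰ η‖ ≤ ‖η‖) ∧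
    (∀ (g : G) (η : lp (fun _ : G => ↥ℰ) ∞),
        Eh ℰ (starE ℰ ρ hstar g η) = starA ρ g (Eh ℰ η)) ∧
    (∀ x : ↥ℰ, Eh ℰ (constE x) = (x : lp (fun _ : G => X →L[ℝ] ℝ) ∞)) := by
  classical
  -- coordinates of Eh
  have hEh : ∀ (η : lp (fun _ : G => ↥ℰ) ∞) (g : G),
      (Eh ℰ η : G → X →L[ℝ] ℝ) g
        = ((η g : lp (fun _ : G => X →L[ℝ] ℝ) ∞) : G → X →L[ℝ] ℝ) g := fun _ _ => rfl
  refine ⟨?_, ?_, ?_, ?_, ?_, ?_⟩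
  · -- (1) takes values in ℰ
    intro η
    -- indicator functions
    have hδmem : ∀ g : G, ∀ h : G, ‖(if h = g then (1:ℝ) else 0)‖ ≤ 1 := by
      intro g h; split <;> simp
    set δ : G → lp (fun _ : G => ℝ) ∞ :=
      fun g => linfElem (fun h => if h = g then (1:ℝ) else 0) 1 (hδmem g) with hδ
    set S : Finset G → ↥ℰ :=
      fun F => ∑ g ∈ F, (⟨bullet (δ g) ↑(η g), hbullet (δ g) _ (η g).2⟩ : ↥ℰ) with hS
    have hScoord : ∀ (F : Finset G) (h : G),
        ((S F : lp (fun _ : G => X →L[ℝ] ℝ) ∞) : G → X →L[ℝ] ℝ) h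
          = if h ∈ F then (Eh ℰ η : G → X →L[ℝ] ℝ) h else 0 := by
      intro F h
      have : ((S F : lp (fun _ : G => X →L[ℝ] ℝ) ∞))
          = ∑ g ∈ F, bullet (δ g) ↑(η g) := by
        simp [hS]
      rw [this, lp.coeFn_sum, Finset.sum_apply]
      have : ∀ g ∈ F, (bullet (δ g) ↑(η g) : G → X →L[ℝ] ℝ) h
          = if h = g then ((η g : lp (fun _ : G => X →L[ℝ] ℝ) ∞) : G → X →L[ℝ] ℝ) h
            else 0 := by
        intro g _
        show (if h = g then (1:ℝ) else 0) • _ = _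
        split <;> simp
      rw [Finset.sum_congr rfl this, Finset.sum_ite_eq]
      split <;> simp [hEh]
    -- summability of the pairing
    have key : ∀ ν : lp (fun _ : G => X) 1,
        Filter.Tendsto (fun F : Finset G =>
            ∑' h : G, ((S F : lp (fun _ : G => X →L[ℝ] ℝ) ∞) : G → X →L[ℝ] ℝ) h (ν h))
          Filter.atTop (nhds (∑' h : G, (Eh ℰ η : G → X →L[ℝ] ℝ) h (ν h))) := by
      intro ν
      have hsum : Summable fun h : G => (Eh ℰ η : G → X →L[ℝ] ℝ) h (ν h) := by
        have hν : Summable fun h : G => ‖ν h‖ := by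
          have := ν.2.summable (by norm_num : (0:ℝ) < (1 : ℝ≥0∞).toReal)
          simpa using this
        refine Summable.of_norm (Summable.of_nonneg_of_le (fun h => norm_nonneg _)
          (fun h => ?_) (hν.mul_left ‖η‖))
        calc ‖(Eh ℰ η : G → X →L[ℝ] ℝ) h (ν h)‖
            ≤ ‖(Eh ℰ η : G → X →L[ℝ] ℝ) h‖ * ‖ν h‖ :=
              ContinuousLinearMap.le_opNorm _ _
          _ ≤ ‖η‖ * ‖ν h‖ := by
              gcongr
              exact (lp.norm_apply_le_norm ENNReal.top_ne_zero
                  (η h : lp (fun _ : G => X →L[ℝ] ℝ) ∞) h).trans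
                (lp.norm_apply_le_norm ENNReal.top_ne_zero η h)
      have hEq : ∀ F : Finset G,
          (∑' h : G, ((S F : lp (fun _ : G => X →L[ℝ] ℝ) ∞) : G → X →L[ℝ] ℝ) h (ν h))
            = ∑ h ∈ F, (Eh ℰ η : G → X →L[ℝ] ℝ) h (ν h) := by
        intro F
        rw [tsum_eq_sum (s := F) (by
          intro h hh
          rw [hScoord F h, if_neg hh]
          simp)]
        refine Finset.sum_congr rfl fun h hh => ?_
        rw [hScoord F h, if_pos hh]
      simp only [hEq]
      exact hsum.hasSum
    -- conclude by weak-* closedness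
    have htend : Filter.Tendsto (fun F : Finset G => (S F : lp (fun _ : G => X →L[ℝ] ℝ) ∞))
        Filter.atTop (@nhds _ (wstar G X) (Eh ℰ η)) := by
      rw [wstar, nhds_iInf]
      rw [Filter.tendsto_iInf]
      intro ν
      rw [nhds_induced, Filter.tendsto_comap_iff]
      exact key ν
    exact @IsClosed.mem_of_tendsto _ (wstar G X) _ _ _ _ _ _ hclosed htend
      (Filter.Eventually.of_forall fun F => (S F).2)
  · -- (2a) additivity
    intro η η'
    apply lp.ext
    funext g
    have : ((η + η') g : lp (fun _ : G => X →L[ℝ] ℝ) ∞)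
        = ↑(η g) + ↑(η' g) := by
      rw [lp.coeFn_add]; rfl
    show ((((η + η') g : ↥ℰ) : lp (fun _ : G => X →L[ℝ] ℝ) ∞) : G → X →L[ℝ] ℝ) g = _
    rw [this, lp.coeFn_add]
    rfl
  · -- (2b) homogeneity
    intro c η
    apply lp.ext
    funext g
    have : (((c • η) g : ↥ℰ) : lp (fun _ : G => X →L[ℝ] ℝ) ∞)
        = c • ↑(η g) := by
      rw [lp.coeFn_smul]; rfl
    show ((((c • η) g : ↥ℰ) : lp (fun _ : G => X →L[ℝ] ℝ) ∞) : G → X →L[ℝ] ℝ) g = _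
    rw [this, lp.coeFn_smul]
    rfl
  · -- (2c) norm bound
    intro η
    refine lp.norm_le_of_forall_le (norm_nonneg η) fun g => ?_
    exact (lp.norm_apply_le_norm ENNReal.top_ne_zero
        (η g : lp (fun _ : G => X →L[ℝ] ℝ) ∞) g).trans
      (lp.norm_apply_le_norm ENNReal.top_ne_zero η g)
  · -- (3) equivariance
    intro g η
    apply lp.ext
    funext h
    rfl
  · -- (4) left inverse of the inclusion
    intro x
    apply lp.ext
    funext g
    rfl
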